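/- Let $d \geq 1$ and let $\mathcal{B} = \{B_1, \ldots, B_d\}$ be an orthogonal collection of $d$-dimensional bars with $n_i(B_i) = b_i \neq 1$ for each $i$. If the box $R$ determined by sidelengths $(\ell_1, \ldots, \ell_d)$ can be tiled by translates of bars from $\mathcal{B}$, then there exists $i \in [d]$ such that $b_i$ divides $\ell_i$, and consequently the single bar $B_i$ tiles $R$. -/

import Mathlib

/-- The translate by `s` of the box with sidelength vector `n`, as a set of points
of `ℕ^d`. -/
def translBox {d : ℕ} (n : Fin d → ℕ) (s : Fin d → ℕ) : Set (Fin d → ℕ) :=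
  {p | ∀ j, s j ≤ p j ∧ p j < s j + n j}

/-- The box of sidelengths `ℓ` based at the origin. -/
def boxSet {d : ℕ} (ℓ : Fin d → ℕ) : Set (Fin d → ℕ) :=
  {p | ∀ j, p j < ℓ j}

/-- Sidelength vector of the bar `Bᵢ`: sidelength `b i` in coordinate `i` and `1`
elsewhere. -/
def barSides {d : ℕ} (b : Fin d → ℕ) (i : Fin d) : Fin d → ℕ :=
  fun j => if j = i then b i else 1

/-- The box `boxSet ℓ` is tiled by translates of the bars `Bᵢ` for `i ∈ I`: there is a
set `T` of (bar index, translation) pairs, with indices in `I`, each translated bar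
contained in the box, and each point of the box covered by exactly one translated bar. -/
def TiledByBars {d : ℕ} (b : Fin d → ℕ) (ℓ : Fin d → ℕ) (I : Set (Fin d)) : Prop :=
  ∃ T : Set (Fin d × (Fin d → ℕ)),
    (∀ t ∈ T, t.1 ∈ I ∧ translBox (barSides b t.1) t.2 ⊆ boxSet ℓ) ∧
    ∀ p ∈ boxSet ℓ, ∃! t : Fin d × (Fin d → ℕ),
      t ∈ T ∧ p ∈ translBox (barSides b t.1) t.2

/-- Weight function: `b·[b ∣ k] − 1`. -/
def wgt (b k : ℕ) : ℤ := if b ∣ k then (b : ℤ) - 1 else -1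

lemma wgt_sum_block {b : ℕ} (hb : 0 < b) (s : ℕ) :
    ∑ k ∈ Finset.Ico s (s + b), wgt b k = 0 := by
  induction s with
  | zero =>
    simp only [Nat.zero_add]
    rcases Nat.exists_eq_add_of_lt hb with ⟨c, hc⟩
    have hneg : ∀ k ∈ Finset.Ico 1 b, wgt b k = -1 := by
      intro k hk
      simp only [Finset.mem_Ico] at hk
      have : ¬ b ∣ k := fun h => absurd (Nat.le_of_dvd (by omega) h) (by omega)
      simp [wgt, this]
    rw [← Finset.sum_Ico_consecutive (wgt b) (Nat.zero_le 1) hb,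
      Finset.sum_congr rfl hneg]
    simp [wgt, Nat.card_Ico, Finset.sum_Ico_eq_sum_range]
    omega
  | succ n ih =>
    rw [Finset.sum_eq_sum_Ico_succ_bot (by omega) (wgt b)] at ih
    rw [show n+1+b = (n+b)+1 by omega,
      Finset.sum_Ico_succ_top (by omega) (wgt b)]
    have hw : wgt b (n + b) = wgt b n := by
      simp only [wgt, Nat.dvd_add_self_right]
    rw [hw]
    omega

lemma wgt_sum_range {b : ℕ} (hb : 0 < b) (ℓ : ℕ)
    (h : ∑ k ∈ Finset.range ℓ, wgt b k = 0) : b ∣ ℓ := by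
  induction ℓ using Nat.strong_induction_on with
  | _ ℓ ih =>
    rcases lt_or_ge ℓ b with hlt | hle
    · rcases Nat.eq_zero_or_pos ℓ with h0 | hpos
      · simp [h0]
      · exfalso
        have hval : ∑ k ∈ Finset.range ℓ, wgt b k = (b : ℤ) - ℓ := by
          have hneg : ∀ k ∈ Finset.Ico 1 ℓ, wgt b k = -1 := by
            intro k hk
            simp only [Finset.mem_Ico] at hk
            have : ¬ b ∣ k := fun hd => absurd (Nat.le_of_dvd (by omega) hd) (by omega)
            simp [wgt, this]
          rw [Finset.range_eq_Ico, ← Finset.sum_Ico_consecutive _ (Nat.zero_le 1) hpos,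
            Finset.sum_congr rfl hneg]
          simp [wgt, Nat.card_Ico]
          omega
        rw [hval] at h
        omega
    · have hsplit : Finset.range ℓ = Finset.range (ℓ - b) ∪ Finset.Ico (ℓ - b) ℓ := by
        rw [Finset.range_eq_Ico, Finset.range_eq_Ico,
          Finset.Ico_union_Ico_eq_Ico (Nat.zero_le _) (by omega)]
      have hd : Disjoint (Finset.range (ℓ - b)) (Finset.Ico (ℓ - b) ℓ) := by
        simp only [Finset.disjoint_left, Finset.mem_Ico, Finset.mem_range]
        omega
      rw [hsplit, Finset.sum_union hd] at h
      have hblock := wgt_sum_block hb (ℓ - b)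
      rw [show ℓ - b + b = ℓ by omega] at hblock
      rw [hblock, add_zero] at h
      have hdvd := ih (ℓ - b) (by omega) h
      rw [show ℓ = (ℓ - b) + b by omega]
      exact Nat.dvd_add hdvd dvd_rfl

/-- If `b i ∣ ℓ i` then the single bar `B i` tiles the box. -/
lemma singleBarTiling {d : ℕ} (b ℓ : Fin d → ℕ) (i : Fin d) (hbpos : 0 < b i)
    (hdvd : b i ∣ ℓ i) : TiledByBars b ℓ {i} := by
  classical
  refine ⟨{t | t.1 = i ∧ (∀ j, t.2 j < ℓ j) ∧ b i ∣ t.2 i}, ?_, ?_⟩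
  · rintro ⟨i', s⟩ ⟨hi', hs, hsd⟩
    simp only at hi' hs hsd
    subst i'
    refine ⟨rfl, ?_⟩
    intro p hp j
    have hpj := hp j
    simp only [barSides] at hpj
    by_cases hj : j = i
    · subst j
      rw [if_pos rfl] at hpj
      have h1 := Nat.le_of_dvd (by have := hs i; omega) (Nat.dvd_sub hdvd hsd)
      have h2 := hs i
      omega
    · rw [if_neg hj] at hpj
      have := hs j
      omega
  · intro p hp
    have hpbox : ∀ j, p j < ℓ j := hp
    have hmod := Nat.div_add_mod (p i) (b i)
    have hmodlt : p i % b i < b i := Nat.mod_lt _ hbpos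
    refine ⟨(i, fun j => if j = i then b i * (p i / b i) else p j), ⟨⟨rfl, ?_, ?_⟩, ?_⟩, ?_⟩
    · intro j
      show (if j = i then b i * (p i / b i) else p j) < ℓ j
      split_ifs with hj
      · rw [hj]; have := hpbox i; omega
      · exact hpbox j
    · show b i ∣ (if i = i then b i * (p i / b i) else p i)
      rw [if_pos rfl]
      exact Dvd.intro _ rfl
    · intro j
      show (if j = i then b i * (p i / b i) else p j) ≤ p j ∧
        p j < (if j = i then b i * (p i / b i) else p j) + barSides b i j
      simp only [barSides]
      split_ifs with hj
      · rw [hj]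
        omega
      · omega
    · rintro ⟨i', s'⟩ ⟨⟨hi', hs', hsd'⟩, hp'⟩
      simp only at hi' hs' hsd' hp'
      subst i'
      have hfun : s' = fun j => if j = i then b i * (p i / b i) else p j := by
        funext j
        have hpj := hp' j
        simp only [barSides] at hpj
        split_ifs with hj
        · rw [hj] at hpj ⊢
          rw [if_pos rfl] at hpj
          obtain ⟨q, hq⟩ := hsd'
          rw [hq] at hpj
          have hdiv : p i / b i = q := Nat.div_eq_of_lt_le
            (by rw [mul_comm]; exact hpj.1)
            (by rw [Nat.succ_mul, mul_comm]; exact hpj.2)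
          rw [hq, hdiv]
        · rw [if_neg hj] at hpj
          omega
      rw [hfun]

/-- Let `𝓑 = {B₁, …, B_d}` be an orthogonal collection of `d`-dimensional
bars, with `nᵢ(Bᵢ) = bᵢ ≠ 1`. If the box with sidelengths `(ℓ₁, …, ℓ_d)` is tiled by
translates of bars from `𝓑`, then there is an `i` with `bᵢ ∣ ℓᵢ`, and consequently the
single bar `Bᵢ` tiles the box. -/
theorem orthogonal_bars_tiling (d : ℕ) (hd : 0 < d) (b : Fin d → ℕ)
    (hbpos : ∀ i, 0 < b i) (hb : ∀ i, b i ≠ 1)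
    (ℓ : Fin d → ℕ)
    (htiled : TiledByBars b ℓ Set.univ) :
    ∃ i : Fin d, b i ∣ ℓ i ∧ TiledByBars b ℓ {i} := by
  classical
  by_cases h0 : ∃ j, ℓ j = 0
  · obtain ⟨j, hj⟩ := h0
    refine ⟨j, hj ▸ dvd_zero _, ⟨∅, by simp, ?_⟩⟩
    intro p hp
    exact absurd (hp j) (by simp [hj])
  push_neg at h0
  obtain ⟨T, hT1, hT2⟩ := htiled
  -- the base point of each tile is in the box
  have hself : ∀ t ∈ T, t.2 ∈ translBox (barSides b t.1) t.2 := by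
    intro t ht j
    refine ⟨le_refl _, ?_⟩
    simp only [barSides]
    split
    · have := hbpos t.1; omega
    · omega
  have hTfin : T.Finite := by
    have hboxfin : (boxSet ℓ).Finite := by
      apply Set.Finite.ofFinset (Fintype.piFinset fun j => Finset.range (ℓ j))
      intro s
      simp [Fintype.mem_piFinset, boxSet]
    apply Set.Finite.subset (Set.Finite.prod (Set.finite_univ (α := Fin d)) hboxfin)
    intro t ht
    exact ⟨Set.mem_univ _, (hT1 t ht).2 (hself t ht)⟩
  set T' := hTfin.toFinset with hT'
  set BoxF : Finset (Fin d → ℕ) := Fintype.piFinset fun j => Finset.range (ℓ j) with hBoxF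
  set barF : (Fin d × (Fin d → ℕ)) → Finset (Fin d → ℕ) :=
    fun t => Fintype.piFinset fun j => Finset.Ico (t.2 j) (t.2 j + barSides b t.1 j)
    with hbarFdef
  have hbarF : ∀ t p, p ∈ barF t ↔ p ∈ translBox (barSides b t.1) t.2 := by
    intro t p
    simp [hbarFdef, Fintype.mem_piFinset, Finset.mem_Ico, translBox]
  have hBoxmem : ∀ p : Fin d → ℕ, p ∈ BoxF ↔ p ∈ boxSet ℓ := by
    intro p
    simp [hBoxF, Fintype.mem_piFinset, boxSet]
  have hcover : BoxF = T'.biUnion barF := by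
    ext p
    simp only [Finset.mem_biUnion]
    constructor
    · intro hp
      obtain ⟨t, ⟨ht, hpt⟩, _⟩ := hT2 p ((hBoxmem p).1 hp)
      exact ⟨t, hTfin.mem_toFinset.2 ht, (hbarF t p).2 hpt⟩
    · rintro ⟨t, ht, hpt⟩
      exact (hBoxmem p).2 ((hT1 t (hTfin.mem_toFinset.1 ht)).2 ((hbarF t p).1 hpt))
  have hdisj : (↑T' : Set (Fin d × (Fin d → ℕ))).PairwiseDisjoint barF := by
    intro t ht t' ht' hne
    apply Finset.disjoint_left.2
    intro p hpt hpt'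
    have ht0 : t ∈ T := hTfin.mem_toFinset.1 (Finset.mem_coe.1 ht)
    have ht0' : t' ∈ T := hTfin.mem_toFinset.1 (Finset.mem_coe.1 ht')
    have hpbox : p ∈ boxSet ℓ := (hT1 t ht0).2 ((hbarF t p).1 hpt)
    obtain ⟨u, _, huniq⟩ := hT2 p hpbox
    exact hne ((huniq t ⟨ht0, (hbarF t p).1 hpt⟩).trans
      (huniq t' ⟨ht0', (hbarF t' p).1 hpt'⟩).symm)
  have hzero : ∑ p ∈ BoxF, ∏ j, wgt (b j) (p j) = 0 := by
    rw [hcover, Finset.sum_biUnion hdisj]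
    apply Finset.sum_eq_zero
    intro t ht
    rw [hbarFdef]
    rw [← Finset.prod_univ_sum]
    apply Finset.prod_eq_zero (Finset.mem_univ t.1)
    have hbar : barSides b t.1 t.1 = b t.1 := by simp [barSides]
    rw [hbar]
    exact wgt_sum_block (hbpos t.1) _
  have hprod : ∏ j, ∑ k ∈ Finset.range (ℓ j), wgt (b j) k = 0 := by
    rw [Finset.prod_univ_sum]
    exact hzero
  obtain ⟨i, _, hi⟩ := Finset.prod_eq_zero_iff.1 hprod
  have hdvd : b i ∣ ℓ i := wgt_sum_range (hbpos i) _ hi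
  exact ⟨i, hdvd, singleBarTiling b ℓ i (hbpos i) hdvd⟩
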